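/- A one-parameter semigroup of Gaussian channels (X_t,Y_t)_{t≥0} has bounded noise term (i.e., sup_t ‖Y_t‖ < ∞) if and only if there exists a positive semidefinite real matrix 𝒴 such that Y_t = 𝒴 − X_t𝒴X_tᵀ for all t ≥ 0. -/

import Mathlib

open Matrix Complex
open scoped ComplexOrder

noncomputable section

/-- Index set for `2n × 2n` matrices, grouped as `n` pairs of modes. -/
abbrev Idx (n : ℕ) := Fin n × Fin 2

abbrev Mat (n : ℕ) := Matrix (Idx n) (Idx n) ℝ

/-- The elementary symplectic form `[[0,1],[-1,0]]`. -/
def sigma1 : Matrix (Fin 2) (Fin 2) ℝ := !![0, 1; -1, 0]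

/-- The standard symplectic form: block-diagonal with `n` copies of `sigma1`. -/
def symp (n : ℕ) : Mat n :=
  Matrix.kroneckerMap (· * ·) (1 : Matrix (Fin n) (Fin n) ℝ) sigma1

/-- Complexification of a real matrix. -/
def toC {m : Type*} (M : Matrix m m ℝ) : Matrix m m ℂ := M.map Complex.ofReal

/-- The complete positivity condition `Y ≥ i (σ - X σ Xᵀ)` for a Gaussian channel `(X, Y)`. -/
def IsGaussian {n : ℕ} (X Y : Mat n) : Prop :=
  (toC Y - Complex.I • toC (symp n - X * symp n * Xᵀ)).PosSemidef

/-- The semigroup product of Gaussian channels. -/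
def gProd {n : ℕ} (p q : Mat n × Mat n) : Mat n × Mat n :=
  (p.1 * q.1, p.2 + p.1 * q.2 * p.1ᵀ)

open scoped Matrix.Norms.L2Operator

section Aux

open Filter

set_option linter.unusedSectionVars false

variable {m : Type*} [Fintype m] [DecidableEq m]

/-- quadratic form bound by operator norm -/
lemma quad_le_opNorm (M : Matrix m m ℝ) (x : EuclideanSpace ℝ m) :
    (x : m → ℝ) ⬝ᵥ M *ᵥ (x : m → ℝ) ≤ ‖M‖ * ‖x‖ ^ 2 := by
  have h1 : (x : m → ℝ) ⬝ᵥ M *ᵥ (x : m → ℝ)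
      = inner ℝ x ((EuclideanSpace.equiv m ℝ).symm (M *ᵥ (x : m → ℝ))) := by
    simp [PiLp.inner_apply, dotProduct, RCLike.inner_apply, mul_comm]
  rw [h1]
  calc inner ℝ x ((EuclideanSpace.equiv m ℝ).symm (M *ᵥ (x : m → ℝ)))
      ≤ ‖x‖ * ‖(EuclideanSpace.equiv m ℝ).symm (M *ᵥ (x : m → ℝ))‖ := real_inner_le_norm _ _
    _ ≤ ‖x‖ * (‖M‖ * ‖x‖) := by
        have := M.l2_opNorm_mulVec x
        exact mul_le_mul_of_nonneg_left this (norm_nonneg _)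
    _ = ‖M‖ * ‖x‖ ^ 2 := by ring

lemma quad_le_opNorm' (M : Matrix m m ℝ) (v : m → ℝ) :
    v ⬝ᵥ M *ᵥ v ≤ ‖M‖ * ‖(EuclideanSpace.equiv m ℝ).symm v‖ ^ 2 :=
  quad_le_opNorm M ((EuclideanSpace.equiv m ℝ).symm v)

lemma psd_quad_nonneg {A : Matrix m m ℝ} (hA : A.PosSemidef) (v : m → ℝ) :
    0 ≤ v ⬝ᵥ A *ᵥ v := by
  simpa using hA.dotProduct_mulVec_nonneg v

lemma psd_symm_ent {A : Matrix m m ℝ} (hA : A.IsHermitian) : Aᵀ = A := by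
  simpa [Matrix.conjTranspose, Matrix.IsSymm] using hA

lemma quad_symm {A : Matrix m m ℝ} (hA : Aᵀ = A) (v w : m → ℝ) :
    v ⬝ᵥ A *ᵥ w = w ⬝ᵥ A *ᵥ v := by
  calc v ⬝ᵥ A *ᵥ w = (v ᵥ* A) ⬝ᵥ w := dotProduct_mulVec _ _ _
    _ = (A *ᵥ v) ⬝ᵥ w := by conv_lhs => rw [← hA, vecMul_transpose]
    _ = w ⬝ᵥ A *ᵥ v := dotProduct_comm _ _

/-- Cauchy–Schwarz for a PSD real matrix. -/
lemma psd_cauchy_schwarz {A : Matrix m m ℝ} (hA : A.PosSemidef) (v w : m → ℝ) :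
    (v ⬝ᵥ A *ᵥ w) ^ 2 ≤ (v ⬝ᵥ A *ᵥ v) * (w ⬝ᵥ A *ᵥ w) := by
  have hs := psd_symm_ent hA.1
  have h : ∀ x : ℝ, 0 ≤ (w ⬝ᵥ A *ᵥ w) * (x * x) + (2 * (v ⬝ᵥ A *ᵥ w)) * x + (v ⬝ᵥ A *ᵥ v) := by
    intro x
    have h0 := psd_quad_nonneg hA (x • w + v)
    have hsym := quad_symm hs v w
    simp only [Matrix.mulVec_add, Matrix.mulVec_smul, dotProduct_add, add_dotProduct,
      smul_dotProduct, dotProduct_smul, smul_eq_mul] at h0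
    rw [hsym] at h0 ⊢
    linarith
  have := discrim_le_zero h
  rw [discrim] at this
  nlinarith [this]

/-- Loewner monotonicity of the L2 operator norm on PSD matrices. -/
lemma opNorm_le_of_psd_le {A B : Matrix m m ℝ} (hA : A.PosSemidef)
    (hBA : (B - A).PosSemidef) : ‖A‖ ≤ ‖B‖ := by
  rw [Matrix.l2_opNorm_def]
  apply ContinuousLinearMap.opNorm_le_bound _ (norm_nonneg B)
  intro x
  set u : m → ℝ := A *ᵥ (x : m → ℝ) with hu
  set U : EuclideanSpace ℝ m := (EuclideanSpace.equiv m ℝ).symm u with hU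
  have happ : ((Matrix.toEuclideanLin.trans LinearMap.toContinuousLinearMap) A) x = U := rfl
  rw [happ]
  have hsA : Aᵀ = A := psd_symm_ent hA.1
  have hxAu : (x : m → ℝ) ⬝ᵥ A *ᵥ u = u ⬝ᵥ u := by
    rw [dotProduct_mulVec]
    conv_lhs => rw [← hsA, vecMul_transpose]
  have hnorm2 : ‖U‖ ^ 2 = u ⬝ᵥ u := by
    rw [← real_inner_self_eq_norm_sq U]
    simp [PiLp.inner_apply, dotProduct, RCLike.inner_apply, hU, EuclideanSpace.real_norm_sq_eq, ← sq]
  have hqA : ∀ v : m → ℝ, v ⬝ᵥ A *ᵥ v ≤ v ⬝ᵥ B *ᵥ v := by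
    intro v
    have := psd_quad_nonneg hBA v
    simp only [Matrix.sub_mulVec, dotProduct_sub] at this
    linarith
  have hcs := psd_cauchy_schwarz hA (x : m → ℝ) u
  have hbx := quad_le_opNorm B x
  have hbu : u ⬝ᵥ B *ᵥ u ≤ ‖B‖ * ‖U‖ ^ 2 := quad_le_opNorm B U
  have hAx := psd_quad_nonneg hA (x : m → ℝ)
  have hAu := psd_quad_nonneg hA u
  have key : ‖U‖ ^ 2 * ‖U‖ ^ 2 ≤ (‖B‖ * ‖x‖ ^ 2) * (‖B‖ * ‖U‖ ^ 2) := by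
    calc ‖U‖ ^ 2 * ‖U‖ ^ 2 = ((x : m → ℝ) ⬝ᵥ A *ᵥ u) ^ 2 := by
          rw [hxAu, hnorm2]; ring
      _ ≤ ((x : m → ℝ) ⬝ᵥ A *ᵥ (x : m → ℝ)) * (u ⬝ᵥ A *ᵥ u) := hcs
      _ ≤ ((x : m → ℝ) ⬝ᵥ B *ᵥ (x : m → ℝ)) * (u ⬝ᵥ B *ᵥ u) := by
          apply mul_le_mul (hqA _) (hqA _) hAu
          linarith [hqA (x : m → ℝ)]
      _ ≤ (‖B‖ * ‖x‖ ^ 2) * (‖B‖ * ‖U‖ ^ 2) := by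
          apply mul_le_mul hbx hbu (hAu.trans (hqA u))
          positivity
  rcases eq_or_lt_of_le (norm_nonneg U) with h0 | h0
  · rw [← h0]; positivity
  · have h2 : ‖U‖ ^ 2 * ‖U‖ ^ 2 ≤ (‖B‖ * ‖x‖) ^ 2 * ‖U‖ ^ 2 := by nlinarith [key]
    have h3 : ‖U‖ ^ 2 ≤ (‖B‖ * ‖x‖) ^ 2 :=
      le_of_mul_le_mul_right h2 (by positivity)
    exact le_of_pow_le_pow_left₀ two_ne_zero (by positivity) h3

lemma real_psd_of_complex {Y A : Matrix m m ℝ}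
    (h : ((Y.map Complex.ofReal) - Complex.I • (A.map Complex.ofReal)).PosSemidef) :
    Y.PosSemidef := by
  refine Matrix.PosSemidef.of_dotProduct_mulVec_nonneg ?_ ?_
  · ext i j
    have h1 := congrFun (congrFun h.1 i) j
    simp only [Matrix.conjTranspose_apply, Matrix.sub_apply, Matrix.smul_apply,
      Matrix.map_apply, smul_eq_mul, star_sub, star_mul', Complex.star_def,
      Complex.conj_conj, Complex.conj_I, Complex.conj_ofReal] at h1
    have h2 := congrArg Complex.re h1
    simp [Matrix.conjTranspose_apply, Complex.mul_re] at h2 ⊢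
    exact h2
  · intro x
    have h2 := h.dotProduct_mulVec_nonneg (fun k => (x k : ℂ))
    rw [Complex.nonneg_iff] at h2
    have h3 := h2.1
    simp only [dotProduct, Matrix.mulVec, Pi.star_apply, Complex.star_def, Complex.conj_ofReal,
      Matrix.sub_apply, Matrix.smul_apply, Matrix.map_apply, smul_eq_mul] at h3
    rw [Complex.re_sum] at h3
    simp only [Complex.mul_re, Complex.ofReal_re, Complex.ofReal_im] at h3
    have hre : ∀ i, ((∑ j, ((Y i j : ℂ) - Complex.I * (A i j : ℝ)) * (x j : ℂ)).re)
        = ∑ j, Y i j * x j := by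
      intro i
      rw [Complex.re_sum]
      congr 1; ext j
      simp [Complex.mul_re, Complex.sub_re, Complex.sub_im, Complex.mul_im]
    simp only [hre, zero_mul, sub_zero] at h3
    simpa [dotProduct, Matrix.mulVec, Finset.mul_sum, star_trivial] using h3

lemma quad_polar {M : Matrix m m ℝ} (hM : Mᵀ = M) (i j : m) :
    ((Pi.single i 1 + Pi.single j 1) ⬝ᵥ M *ᵥ (Pi.single i 1 + Pi.single j 1)
      - Pi.single i 1 ⬝ᵥ M *ᵥ (Pi.single i 1 : m → ℝ)
      - Pi.single j 1 ⬝ᵥ M *ᵥ (Pi.single j 1 : m → ℝ)) / 2 = M i j := by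
  have hs : M j i = M i j := by
    conv_rhs => rw [← hM]
    simp
  simp [add_dotProduct, dotProduct_add, Matrix.mulVec_add, Matrix.mulVec_single,
    dotProduct_single, single_dotProduct, hs]
  ring

lemma quad_continuous (v : m → ℝ) : Continuous fun M : Matrix m m ℝ => v ⬝ᵥ M *ᵥ v := by
  show Continuous fun M : Matrix m m ℝ => ∑ i, v i * ∑ j, M i j * v j
  refine continuous_finset_sum _ fun i _ => Continuous.mul continuous_const ?_
  exact continuous_finset_sum _ fun j _ =>
    ((continuous_id.matrix_elem i j).mul continuous_const)

end Aux

open Filter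
theorem bounded_noise_iff_simple_form (n : ℕ) (X Y : ℝ → Mat n)
    (hXc : Continuous X) (hYc : Continuous Y)
    (hX0 : X 0 = 1) (hY0 : Y 0 = 0)
    (hsg : ∀ t s : ℝ, 0 ≤ t → 0 ≤ s →
      X t * X s = X (t + s) ∧ Y (t + s) = Y t + X t * Y s * (X t)ᵀ)
    (hG : ∀ t : ℝ, 0 ≤ t → IsGaussian (X t) (Y t)) :
    (∃ c : ℝ, ∀ t : ℝ, 0 ≤ t → ‖Y t‖ ≤ c) ↔
      ∃ Ycal : Mat n, Ycal.PosSemidef ∧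
        ∀ t : ℝ, 0 ≤ t → Y t = Ycal - X t * Ycal * (X t)ᵀ := by
  have hYpsd : ∀ t : ℝ, 0 ≤ t → (Y t).PosSemidef := fun t ht =>
    real_psd_of_complex (hG t ht)
  constructor
  · rintro ⟨c, hc⟩
    set Z : ℝ → Mat n := fun s => Y (max s 0) with hZ
    have hZpsd : ∀ s, (Z s).PosSemidef := fun s => hYpsd _ (le_max_right _ _)
    have hZsymm : ∀ s, (Z s)ᵀ = Z s := fun s => psd_symm_ent (hZpsd s).1
    have hmono : ∀ v : Idx n → ℝ, Monotone fun s => v ⬝ᵥ Z s *ᵥ v := by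
      intro v s t hst
      have ha : (0:ℝ) ≤ max s 0 := le_max_right _ _
      have hd : (0:ℝ) ≤ max t 0 - max s 0 := by
        have : max s 0 ≤ max t 0 := max_le_max hst le_rfl
        linarith
      have hsum := (hsg (max s 0) (max t 0 - max s 0) ha hd).2
      have he : max s 0 + (max t 0 - max s 0) = max t 0 := by ring
      rw [he] at hsum
      have hpsd2 : (X (max s 0) * Y (max t 0 - max s 0) * (X (max s 0))ᵀ).PosSemidef := by
        have h1 : (Y (max t 0 - max s 0)).PosSemidef := hYpsd _ hd
        have := h1.mul_mul_conjTranspose_same (X (max s 0))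
        rwa [Matrix.conjTranspose_eq_transpose_of_trivial] at this
      have hq := psd_quad_nonneg hpsd2 v
      show v ⬝ᵥ Z s *ᵥ v ≤ v ⬝ᵥ Z t *ᵥ v
      simp only [hZ, hsum, Matrix.add_mulVec, dotProduct_add]
      linarith
    have hbdd : ∀ v : Idx n → ℝ, BddAbove (Set.range fun s => v ⬝ᵥ Z s *ᵥ v) := by
      intro v
      refine ⟨c * ‖(EuclideanSpace.equiv (Idx n) ℝ).symm v‖ ^ 2, ?_⟩
      rintro _ ⟨s, rfl⟩
      calc v ⬝ᵥ Z s *ᵥ v ≤ ‖Z s‖ * ‖(EuclideanSpace.equiv (Idx n) ℝ).symm v‖ ^ 2 :=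
            quad_le_opNorm' (Z s) v
        _ ≤ c * ‖(EuclideanSpace.equiv (Idx n) ℝ).symm v‖ ^ 2 :=
            mul_le_mul_of_nonneg_right (hc _ (le_max_right _ _)) (by positivity)
    set L : (Idx n → ℝ) → ℝ := fun v => ⨆ s, v ⬝ᵥ Z s *ᵥ v with hLdef
    have hL : ∀ v, Tendsto (fun s => v ⬝ᵥ Z s *ᵥ v) atTop (nhds (L v)) :=
      fun v => tendsto_atTop_ciSup (hmono v) (hbdd v)
    set Ycal : Mat n := Matrix.of fun i j =>
      (L (Pi.single i 1 + Pi.single j 1) - L (Pi.single i 1) - L (Pi.single j 1)) / 2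
      with hYcaldef
    have hZtend : Tendsto Z atTop (nhds Ycal) := by
      apply tendsto_pi_nhds.2
      intro i
      apply tendsto_pi_nhds.2
      intro j
      have hentry : ∀ s, ((Pi.single i 1 + Pi.single j 1) ⬝ᵥ
            Z s *ᵥ (Pi.single i 1 + Pi.single j 1)
          - Pi.single i 1 ⬝ᵥ Z s *ᵥ (Pi.single i 1 : Idx n → ℝ)
          - Pi.single j 1 ⬝ᵥ Z s *ᵥ (Pi.single j 1 : Idx n → ℝ)) / 2 = Z s i j :=
        fun s => quad_polar (hZsymm s) i j
      have htt : Tendsto (fun s => ((Pi.single i 1 + Pi.single j 1) ⬝ᵥ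
            Z s *ᵥ (Pi.single i 1 + Pi.single j 1)
          - Pi.single i 1 ⬝ᵥ Z s *ᵥ (Pi.single i 1 : Idx n → ℝ)
          - Pi.single j 1 ⬝ᵥ Z s *ᵥ (Pi.single j 1 : Idx n → ℝ)) / 2) atTop
          (nhds (Ycal i j)) :=
        (((hL _).sub (hL _)).sub (hL _)).div_const 2
      exact htt.congr hentry
    have hYcalpsd : Ycal.PosSemidef := by
      refine Matrix.PosSemidef.of_dotProduct_mulVec_nonneg ?_ ?_
      · ext i j
        show star (Ycal j i) = Ycal i j
        rw [star_trivial]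
        show (L (Pi.single j 1 + Pi.single i 1) - L (Pi.single j 1) - L (Pi.single i 1)) / 2
          = (L (Pi.single i 1 + Pi.single j 1) - L (Pi.single i 1) - L (Pi.single j 1)) / 2
        rw [add_comm]
        ring
      · intro x
        have h1 : Tendsto (fun s => x ⬝ᵥ Z s *ᵥ x) atTop (nhds (x ⬝ᵥ Ycal *ᵥ x)) :=
          ((quad_continuous x).tendsto Ycal).comp hZtend
        have h2 : ∀ s, 0 ≤ x ⬝ᵥ Z s *ᵥ x := fun s => psd_quad_nonneg (hZpsd s) x
        have := ge_of_tendsto h1 (Eventually.of_forall h2)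
        simpa using this
    refine ⟨Ycal, hYcalpsd, ?_⟩
    intro t ht
    have hg : Tendsto (fun s : ℝ => t + max s 0) atTop atTop :=
      tendsto_atTop_add_const_left _ t
        (tendsto_atTop_mono (fun s => le_max_left s 0) tendsto_id)
    have h3 : Tendsto (fun s => Z (t + max s 0)) atTop (nhds Ycal) := hZtend.comp hg
    have h4 : (fun s => Z (t + max s 0)) = fun s => Y t + X t * Z s * (X t)ᵀ := by
      funext s
      have hnn : (0:ℝ) ≤ max s 0 := le_max_right _ _
      have hse := (hsg t (max s 0) ht hnn).2
      show Y (max (t + max s 0) 0) = Y t + X t * Y (max s 0) * (X t)ᵀ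
      rw [max_eq_left (add_nonneg ht hnn)]
      exact hse
    rw [h4] at h3
    have hcont : Continuous fun M : Mat n => Y t + X t * M * (X t)ᵀ :=
      continuous_const.add
        (((continuous_const.matrix_mul continuous_id).matrix_mul continuous_const))
    have h5 : Tendsto (fun s => Y t + X t * Z s * (X t)ᵀ) atTop
        (nhds (Y t + X t * Ycal * (X t)ᵀ)) := (hcont.tendsto Ycal).comp hZtend
    have h6 := tendsto_nhds_unique h3 h5
    exact eq_sub_iff_add_eq.mpr h6.symm
  · rintro ⟨Ycal, hpsd, heq⟩
    refine ⟨‖Ycal‖, fun t ht => ?_⟩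
    have hY : (Y t).PosSemidef := hYpsd t ht
    have hdiff : (Ycal - Y t).PosSemidef := by
      rw [heq t ht, sub_sub_cancel]
      have := hpsd.mul_mul_conjTranspose_same (X t)
      rwa [Matrix.conjTranspose_eq_transpose_of_trivial] at this
    exact opNorm_le_of_psd_le hY hdiff
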